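/- Let p be an odd prime, q = p^ν (ν ≥ 1) a power of p, d = q^2+q+1, and k an algebraically closed field of characteristic p. Let h ∈ k[x_0,x_1,x_2] be the polynomial h = x_0^{q+1} + x_1^{q+1} + x_2^{q+1} − x_0^q x_1 − x_0^q x_2 − x_0 x_1^q − x_1^q x_2 − x_0 x_2^q − x_1 x_2^q + (x_0^2 + x_1^2 + x_2^2 − 2x_0x_1 − 2x_1x_2 − 2x_2x_0)^{(q+1)/2}. Then the set of points [x_1 : x_2] of the projective line P^1 over k satisfying h(0, x_1^d, x_2^d) = 0 has exactly d = q^2+q+1 elements. (These are the points of the dual curve of the Fermat curve of degree d lying on the line x_0 = 0.) -/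

import Mathlib

open MvPolynomial

/-- Let `p` be an odd prime, `q` a power of `p`, `d = q²+q+1`, `k` algebraically closed
of characteristic `p`, and `h` the defining polynomial of the Ballico–Hefez curve. The
set of points `[x₁ : x₂]` of `ℙ¹` with `h(0, x₁^d, x₂^d) = 0` — the points of the dual
curve of the Fermat curve of degree `d` on the line `x₀ = 0` — has exactly
`d = q²+q+1` elements. -/
theorem dual_fermat_points_on_line_x0_card
    {k : Type*} [Field k] [IsAlgClosed k] (p ν q d : ℕ) (hp : p.Prime) (hp2 : p ≠ 2)
    [CharP k p] (hν : 1 ≤ ν) (hq : q = p ^ ν) (hd : d = q ^ 2 + q + 1)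
    (h : MvPolynomial (Fin 3) k)
    (hh : h = X 0 ^ (q + 1) + X 1 ^ (q + 1) + X 2 ^ (q + 1)
        - X 0 ^ q * X 1 - X 0 ^ q * X 2 - X 0 * X 1 ^ q
        - X 1 ^ q * X 2 - X 0 * X 2 ^ q - X 1 * X 2 ^ q
        + (X 0 ^ 2 + X 1 ^ 2 + X 2 ^ 2
            - C 2 * X 0 * X 1 - C 2 * X 1 * X 2 - C 2 * X 2 * X 0) ^ ((q + 1) / 2)) :
    { P : Projectivization k (Fin 2 → k) |
        eval ![0, (P.rep 0) ^ d, (P.rep 1) ^ d] h = 0 }.ncard = d := by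
  have hqodd : Odd q := hq ▸ (hp.odd_of_ne_two hp2).pow
  have hq2 : 2 * ((q + 1) / 2) = q + 1 := Nat.two_mul_div_two_of_even (by
    rcases hqodd with ⟨m, hm⟩; exact ⟨m + 1, by omega⟩)
  have h2 : (2 : k) ≠ 0 := by
    intro h0
    have hdvd : (p : ℕ) ∣ 2 := (CharP.cast_eq_zero_iff k p 2).mp (by exact_mod_cast h0)
    exact hp2 ((Nat.prime_dvd_prime_iff_eq hp Nat.prime_two).mp hdvd)
  have hdpos : 0 < d := by omega
  have hdone : (d : k) = 1 := by
    have hq0 : (q : k) = 0 := by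
      rw [hq]; push_cast
      rw [CharP.cast_eq_zero k p, zero_pow (by omega)]
    rw [hd]; push_cast [hq0]; ring
  -- Key evaluation lemma
  have keval : ∀ y z : k, eval ![0, y, z] h = 0 ↔ y = z := by
    intro y z
    have hfrob : (y - z) ^ q = y ^ q - z ^ q := by
      haveI : Fact p.Prime := ⟨hp⟩
      rw [hq]; exact sub_pow_char_pow y z ν
    have heval : eval ![0, y, z] h = 2 * ((y - z) ^ q * (y - z)) := by
      rw [hh]
      simp only [map_add, map_sub, map_mul, map_pow, eval_X, eval_C,
        Matrix.cons_val_zero, Matrix.cons_val_one, Matrix.head_cons,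
        Matrix.cons_val_two, Matrix.tail_cons]
      have : y ^ 2 + z ^ 2 - 2 * y * z = (y - z) ^ 2 := by ring
      rw [zero_pow (by omega : q + 1 ≠ 0), zero_pow (by omega : q ≠ 0)]
      have e1 : (0 : k) ^ 2 + y ^ 2 + z ^ 2 - 2 * 0 * y - 2 * y * z - 2 * z * 0
          = (y - z) ^ 2 := by ring
      rw [e1, ← pow_mul, hq2]
      have e2 : (y - z) ^ (q + 1) = (y ^ q - z ^ q) * (y - z) := by
        rw [pow_succ, hfrob]
      have e3 : (y - z) ^ q = y ^ q - z ^ q := hfrob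
      rw [e2, e3]
      ring
    rw [heval, mul_eq_zero, mul_eq_zero]
    constructor
    · rintro (h0 | h0 | h0)
      · exact absurd h0 h2
      · exact sub_eq_zero.mp (pow_eq_zero_iff (by omega) |>.mp h0)
      · exact sub_eq_zero.mp h0
    · intro hyz; right; right; rw [hyz, sub_self]
  -- rewrite the set
  have hset : { P : Projectivization k (Fin 2 → k) |
      eval ![0, (P.rep 0) ^ d, (P.rep 1) ^ d] h = 0 }
      = { P | (P.rep 0) ^ d = (P.rep 1) ^ d } := by
    ext P; exact keval _ _
  rw [hset]
  -- the map from d-th roots of unity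
  have hvne : ∀ a : k, (![a, 1] : Fin 2 → k) ≠ 0 := by
    intro a hcon
    have := congrFun hcon 1
    simp at this
  set g : k → Projectivization k (Fin 2 → k) :=
    fun a => Projectivization.mk k ![a, 1] (hvne a) with hg
  have himg : { P : Projectivization k (Fin 2 → k) | (P.rep 0) ^ d = (P.rep 1) ^ d }
      = g '' ↑(Polynomial.nthRootsFinset d (1 : k)) := by
    ext P
    simp only [Set.mem_setOf_eq, Set.mem_image, Finset.mem_coe,
      Polynomial.mem_nthRootsFinset hdpos (1 : k)]
    constructor
    · intro hP
      have hrne := P.rep_nonzero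
      have h1 : P.rep 1 ≠ 0 := by
        intro h10
        have h00 : P.rep 0 = 0 := by
          have := hP
          rw [h10, zero_pow (by omega)] at this
          exact pow_eq_zero_iff (by omega) |>.mp this
        apply hrne
        funext i; fin_cases i <;> assumption
      refine ⟨P.rep 0 / P.rep 1, ?_, ?_⟩
      · rw [div_pow, hP, div_self (pow_ne_zero _ h1)]
      · rw [hg]
        conv_rhs => rw [← P.mk_rep]
        rw [Projectivization.mk_eq_mk_iff]
        refine ⟨Units.mk0 (P.rep 1)⁻¹ (inv_ne_zero h1), ?_⟩
        funext i
        fin_cases i <;>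
          simp [Units.smul_def, div_eq_inv_mul, inv_mul_cancel₀ h1]
    · rintro ⟨a, ha, rfl⟩
      obtain ⟨u, hu⟩ := Projectivization.exists_smul_eq_mk_rep k ![a, 1] (hvne a)
      have h0 : (Projectivization.mk k ![a, 1] (hvne a)).rep 0 = (u : k) * a := by
        rw [← hu]; simp [Units.smul_def]
      have h1 : (Projectivization.mk k ![a, 1] (hvne a)).rep 1 = (u : k) := by
        rw [← hu]; simp [Units.smul_def]
      rw [h0, h1, mul_pow, ha, mul_one]
  rw [himg]
  have hinj : Set.InjOn g ↑(Polynomial.nthRootsFinset d (1 : k)) := by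
    intro a _ b _ hab
    rw [hg] at hab
    simp only at hab
    rw [Projectivization.mk_eq_mk_iff] at hab
    obtain ⟨u, hu⟩ := hab
    have h1 : (u : k) * 1 = 1 := by
      have := congrFun hu 1; simpa [Units.smul_def] using this
    have h0 : (u : k) * b = a := by
      have := congrFun hu 0; simpa [Units.smul_def] using this
    rw [mul_one] at h1
    rw [h1, one_mul] at h0
    exact h0.symm
  rw [Set.ncard_image_of_injOn hinj, Set.ncard_coe_finset]
  have : NeZero (d : k) := ⟨by rw [hdone]; exact one_ne_zero⟩
  obtain ⟨ζ, hζ⟩ := HasEnoughRootsOfUnity.exists_primitiveRoot k d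
  exact hζ.card_nthRootsFinset
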